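/- Under hypotheses (T1), (T2), R(x,y)^⊤ = R(y,x), invariance of μ_I under the involution (the pushforward of μ_I under ⊤ equals μ_I), the anti-automorphism law (the pushforward of δ_i * δ_{i'} under ⊤ equals δ_{i'^⊤} * δ_{i^⊤} for all i, i' ∈ I), and commutativity of the convolution (δ_i * δ_{i'} = δ_{i'} * δ_i for all i, i' ∈ I), one has (f∘R) ∘ (g∘R) = (g∘R) ∘ (f∘R) for all f, g ∈ C(I,ℂ). -/
import Mathlib


open MeasureTheory Topology Filter

noncomputable section

variable {X : Type*} {I : Type*}

/-- The matrix product `(A ∘ B)(x,z) = ∫ A(x,y) B(y,z) dμ(y)`. -/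
def matProd [MeasurableSpace X] (μ : Measure X) (A B : X × X → ℂ) :
    X × X → ℂ :=
  fun p => ∫ y, A (p.1, y) * B (y, p.2) ∂μ

theorem stmt18 [TopologicalSpace X] [CompactSpace X] [T2Space X] [Nonempty X]
    [MeasurableSpace X] [BorelSpace X]
    (μ : Measure X) [IsFiniteMeasure μ] [μ.Regular] [μ.IsOpenPosMeasure]
    [TopologicalSpace I] [CompactSpace I] [T2Space I] [Nonempty I]
    [MeasurableSpace I] [BorelSpace I]
    (R : X × X → I) (hR : Topology.IsQuotientMap R)
    (κ : X × I → Measure X) (hκ : ∀ p : X × I, IsProbabilityMeasure (κ p))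
    (T : I → I) (hTcont : Continuous T) (hTinv : ∀ i : I, T (T i) = i)
    (hTR : ∀ x y : X, T (R (x, y)) = R (y, x))
    (conv : I → I → Measure I) (hconv : ∀ i i' : I, IsProbabilityMeasure (conv i i'))
    (μI : Measure I) [IsFiniteMeasure μI] [μI.Regular]
    (hconvCont : ∀ f g : C(I, ℂ),
      Continuous fun i : I => ∫ i', (∫ j, f j ∂(conv i i')) * g (T i') ∂μI)
    (hT1 : ∀ (i : I) (x z : X) (f : C(I, ℂ)),
      (∫ j, f j ∂(conv (R (x, z)) i)) = ∫ y, f (R (x, y)) ∂(κ (z, i)))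
    (hT2 : ∀ (x : X) (f : C(I, ℂ)) (φ : C(X, ℂ)),
      (∫ i, f i * ∫ y, φ y ∂(κ (x, i)) ∂μI) = ∫ y, f (R (x, y)) * φ y ∂μ)
    (hμIinv : Measure.map T μI = μI)
    (hanti : ∀ i i' : I, Measure.map T (conv i i') = conv (T i') (T i))
    (hcomm : ∀ i i' : I, conv i i' = conv i' i) :
    ∀ f g : C(I, ℂ),
      matProd μ (fun q => f (R q)) (fun q => g (R q)) =
        matProd μ (fun q => g (R q)) (fun q => f (R q)) := by
  intro f g
  have hRc : Continuous R := hR.continuous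
  let e : I ≃ᵐ I :=
    (Homeomorph.mk ⟨T, T, hTinv, hTinv⟩ hTcont hTcont).toMeasurableEquiv
  have hmap : ∀ (ν : Measure I) (h : I → ℂ),
      ∫ j, h j ∂(Measure.map T ν) = ∫ j, h (T j) ∂ν := by
    intro ν h
    have hco : (⇑e : I → I) = T := rfl
    rw [← hco]
    exact MeasureTheory.integral_map_equiv (μ := ν) e h
  funext p
  obtain ⟨x, z⟩ := p
  simp only [matProd]
  have hφg : Continuous fun y => g (R (y, z)) :=
    g.continuous.comp (hRc.comp (continuous_id.prodMk continuous_const))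
  have hφf : Continuous fun y => g (R (x, y)) :=
    g.continuous.comp (hRc.comp (continuous_const.prodMk continuous_id))
  have key1 : ∫ y, f (R (x, y)) * g (R (y, z)) ∂μ
      = ∫ i, f i * ∫ j, g (T j) ∂(conv (R (z, x)) i) ∂μI := by
    have h2 := hT2 x f ⟨fun y => g (R (y, z)), hφg⟩
    simp only [ContinuousMap.coe_mk] at h2
    rw [← h2]
    refine integral_congr_ae (Filter.Eventually.of_forall fun i => ?_)
    dsimp only
    congr 1
    have h1 := hT1 i z x (g.comp ⟨T, hTcont⟩)
    simp only [ContinuousMap.coe_comp, ContinuousMap.coe_mk, Function.comp_apply,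
      hTR] at h1
    exact h1.symm
  have key2 : ∫ i, f (T i) * ∫ j, g j ∂(conv (R (x, z)) i) ∂μI
      = ∫ y, g (R (x, y)) * f (R (y, z)) ∂μ := by
    have h2 := hT2 z (f.comp ⟨T, hTcont⟩) ⟨fun y => g (R (x, y)), hφf⟩
    simp only [ContinuousMap.coe_comp, ContinuousMap.coe_mk, Function.comp_apply,
      hTR] at h2
    have hmulc : (∫ y, g (R (x, y)) * f (R (y, z)) ∂μ)
        = ∫ y, f (R (y, z)) * g (R (x, y)) ∂μ :=
      integral_congr_ae (Filter.Eventually.of_forall fun y => mul_comm _ _)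
    rw [hmulc, ← h2]
    refine integral_congr_ae (Filter.Eventually.of_forall fun i => ?_)
    dsimp only
    congr 1
    exact hT1 i x z g
  have mid : ∫ i, f (T i) * ∫ j, g j ∂(conv (R (x, z)) i) ∂μI
      = ∫ i, f i * ∫ j, g (T j) ∂(conv (R (z, x)) i) ∂μI := by
    conv_lhs => rw [← hμIinv]
    rw [hmap μI fun i => f (T i) * ∫ j, g j ∂(conv (R (x, z)) i)]
    refine integral_congr_ae (Filter.Eventually.of_forall fun i => ?_)
    dsimp only
    rw [hTinv]
    congr 1
    have hc : conv (R (x, z)) (T i) = Measure.map T (conv (R (z, x)) i) := by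
      rw [hanti, hTR]
      exact hcomm _ _
    rw [hc, hmap]
  calc ∫ y, f (R (x, y)) * g (R (y, z)) ∂μ
      = ∫ i, f i * ∫ j, g (T j) ∂(conv (R (z, x)) i) ∂μI := key1
    _ = ∫ i, f (T i) * ∫ j, g j ∂(conv (R (x, z)) i) ∂μI := mid.symm
    _ = ∫ y, g (R (x, y)) * f (R (y, z)) ∂μ := key2
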